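/- Let M be a matroid on the ground set {1,…,n} with nonempty collection of bases B and with no coloops (every element of {1,…,n} lies outside at least one base). With A¹ = { e_k + Σ_{j∉T} e_j : T ∈ B, k ∈ T } and A² = { 2e_q + Σ_{j∈{1,…,n}∖(T∪{q})} e_j : T ∈ B, q ∉ T }, the following holds: for every proper subset I ⊊ {1,…,n} and every b ∈ A¹, there exists a ∈ A² such that a_i ≤ b_i for all i ∈ I. -/

import Mathlib

open scoped Classical in
/-- For a matroid on `{1,…,n}` without coloops, with
`A¹ = {e_k + Σ_{j∉T} e_j : T base, k ∈ T}` and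
`A² = {2e_q + Σ_{j∉T∪{q}} e_j : T base, q ∉ T}`: for every proper subset
`I ⊊ {1,…,n}` and every `b ∈ A¹` there is `a ∈ A²` with `a_i ≤ b_i` for all `i ∈ I`. -/
theorem polya_condition_one (n : ℕ) (M : Matroid (Fin n)) (hE : M.E = Set.univ)
    (hB : ∃ T, M.IsBase T) (hcoloop : ∀ k : Fin n, ∃ T, M.IsBase T ∧ k ∉ T)
    (I : Set (Fin n)) (hI : I ≠ Set.univ)
    (b : Fin n → ℕ)
    (hb : ∃ T k, M.IsBase T ∧ k ∈ T ∧
      b = Set.indicator Tᶜ (fun _ => 1) + Pi.single k 1) :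
    ∃ a : Fin n → ℕ,
      (∃ T q, M.IsBase T ∧ q ∉ T ∧
        a = Set.indicator (T ∪ {q})ᶜ (fun _ => 1) + Pi.single q 2) ∧
      ∀ i ∈ I, a i ≤ b i := by
  obtain ⟨T, k, hT, hk, hbdef⟩ := hb
  obtain ⟨m, hm⟩ : ∃ m : Fin n, m ∉ I := by
    by_contra h
    push_neg at h
    exact hI (Set.eq_univ_of_forall h)
  -- find a base T' with m ∉ T' and T ∩ I \ {k} ⊆ T'
  obtain ⟨T', hT', hmT', hsub⟩ :
      ∃ T', M.IsBase T' ∧ m ∉ T' ∧ ∀ i, i ∈ T → i ≠ m → i ∈ T' := by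
    by_cases hmT : m ∈ T
    · obtain ⟨T₀, hT₀, hmT₀⟩ := hcoloop m
      obtain ⟨y, hy, hTy⟩ := hT.exchange hT₀ ⟨hmT, hmT₀⟩
      refine ⟨insert y (T \ {m}), hTy, ?_, ?_⟩
      · intro hmem
        rcases hmem with h | h
        · exact hy.2 (h ▸ hmT)
        · exact h.2 rfl
      · intro i hi hne
        exact Or.inr ⟨hi, hne⟩
    · exact ⟨T, hT, hmT, fun i hi _ => hi⟩
  refine ⟨_, ⟨T', m, hT', hmT', rfl⟩, ?_⟩
  intro i hiI
  have hne : i ≠ m := fun h => hm (h ▸ hiI)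
  have h2 : (Pi.single m 2 : Fin n → ℕ) i = 0 := Pi.single_eq_of_ne hne 2
  simp only [Pi.add_apply, h2, add_zero, hbdef]
  by_cases hiTq : i ∈ T' ∪ {m}
  · rw [Set.indicator_of_notMem (Set.notMem_compl_iff.mpr hiTq)]
    exact Nat.zero_le _
  · have hin : i ∈ (T' ∪ {m})ᶜ := hiTq
    rw [Set.indicator_of_mem hin]
    have hiT' : i ∉ T' := fun h => hiTq (Or.inl h)
    have : i ∉ T ∨ i = k := by
      by_contra h
      push_neg at h
      exact hiT' (hsub i h.1 hne)
    rcases this with h | h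
    · rw [Set.indicator_of_mem (Set.mem_compl h)]
      exact Nat.le_add_right 1 _
    · subst h
      rw [Pi.single_eq_same]
      exact Nat.le_add_left 1 _
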